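/- Let (γ_k)_{k≥0} be a sequence of real numbers. Let T be the linear operator on ℝ[x] determined by T[H_n] = γ_n H_n with differential coefficients (Q_k)_{k≥0}, and let T̃ be the linear operator determined by T̃[H_n] = (−1)^n γ_n H_n with differential coefficients (Q̃_k)_{k≥0}. Then for each n ∈ ℕ₀: Q_n(x) = (−2)^n Σ_{k=0}^{n} Q̃_k(x) · x^{n−k}/(2^{k} (n−k)!) and Q̃_n(x) = (−2)^n Σ_{k=0}^{n} Q_k(x) · x^{n−k}/(2^{k} (n−k)!). -/

import Mathlib

open Polynomial Finset

noncomputable section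

/-- The physicists' Hermite polynomials. -/
def hermitePoly (n : ℕ) : Polynomial ℝ :=
  ∑ k ∈ Finset.range (n / 2 + 1),
    Polynomial.C ((-1 : ℝ) ^ k * n.factorial * 2 ^ (n - 2 * k) /
      (k.factorial * (n - 2 * k).factorial)) * Polynomial.X ^ (n - 2 * k)

/-- The Laguerre polynomials. -/
def laguerrePoly (n : ℕ) : Polynomial ℝ :=
  ∑ k ∈ Finset.range (n + 1),
    Polynomial.C ((-1 : ℝ) ^ k / k.factorial * n.choose k) * Polynomial.X ^ k

/-- A real polynomial is hyperbolic if all of its complex roots are real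
(the zero polynomial counts as hyperbolic). -/
def Hyperbolic (p : Polynomial ℝ) : Prop :=
  p = 0 ∨ ∀ z : ℂ, Polynomial.aeval z p = 0 → z.im = 0

/-- A linear operator on ℝ[x] preserves hyperbolicity. -/
def HypPreserving (T : Polynomial ℝ →ₗ[ℝ] Polynomial ℝ) : Prop :=
  ∀ p : Polynomial ℝ, Hyperbolic p → Hyperbolic (T p)

/-- Classical multiplier sequence. -/
def ClassicalMS (γ : ℕ → ℝ) : Prop :=
  ∃ T : Polynomial ℝ →ₗ[ℝ] Polynomial ℝ,
    (∀ n, T (Polynomial.X ^ n) = γ n • Polynomial.X ^ n) ∧ HypPreserving T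

/-- Hermite multiplier sequence. -/
def HermiteMS (γ : ℕ → ℝ) : Prop :=
  ∃ T : Polynomial ℝ →ₗ[ℝ] Polynomial ℝ,
    (∀ n, T (hermitePoly n) = γ n • hermitePoly n) ∧ HypPreserving T

/-- Laguerre multiplier sequence. -/
def LaguerreMS (γ : ℕ → ℝ) : Prop :=
  ∃ T : Polynomial ℝ →ₗ[ℝ] Polynomial ℝ,
    (∀ n, T (laguerrePoly n) = γ n • laguerrePoly n) ∧ HypPreserving T

/-- A sequence is trivial if all entries vanish except possibly two at consecutive indices. -/
def TrivialSeq (γ : ℕ → ℝ) : Prop :=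
  ∃ m : ℕ, ∀ n, n ≠ m → n ≠ m + 1 → γ n = 0

section AuxLemmas

lemma diffcoef_unique (A B : ℕ → Polynomial ℝ)
    (h : ∀ p : Polynomial ℝ, ∑ k ∈ range (p.natDegree + 1), A k * derivative^[k] p
        = ∑ k ∈ range (p.natDegree + 1), B k * derivative^[k] p) : ∀ n, A n = B n := by
  intro n
  induction n using Nat.strong_induction_on with
  | _ n ih =>
    have h1 := h (X ^ n)
    rw [natDegree_X_pow, Finset.sum_range_succ, Finset.sum_range_succ,
      Finset.sum_congr rfl (fun k hk => by rw [ih k (mem_range.mp hk)])] at h1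
    have h2 := add_left_cancel h1
    rw [iterate_derivative_X_pow_eq_C_mul, Nat.sub_self, pow_zero, mul_one,
      Nat.descFactorial_self] at h2
    have hC : (C ((n.factorial : ℝ)) : Polynomial ℝ) ≠ 0 := by
      simp [Nat.factorial_ne_zero]
    exact mul_right_cancel₀ hC h2

lemma taylor_neg_monomial (m M : ℕ) (hm : m ≤ M) :
    ((X : Polynomial ℝ) ^ m).comp (-X)
      = ∑ j ∈ range (M + 1), C ((-2 : ℝ) ^ j / j.factorial) * X ^ j * derivative^[j] (X ^ m) := by
  rw [← Finset.sum_subset (Finset.range_subset_range.mpr (Nat.succ_le_succ hm))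
    (fun j hjM hj => by
      rw [mem_range] at hjM hj
      rw [iterate_derivative_X_pow_eq_C_mul,
        Nat.descFactorial_eq_zero_iff_lt.mpr (by omega)]
      simp)]
  have key : ∀ j ∈ range (m + 1),
      C ((-2 : ℝ) ^ j / j.factorial) * X ^ j * derivative^[j] ((X : Polynomial ℝ) ^ m)
        = C ((-2 : ℝ) ^ j * m.choose j) * X ^ m := by
    intro j hj
    rw [mem_range, Nat.lt_succ_iff] at hj
    rw [iterate_derivative_X_pow_eq_C_mul]
    have h1 : C ((-2:ℝ)^j / j.factorial) * X ^ j * (C ((m.descFactorial j : ℕ) : ℝ) * X ^ (m-j))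
        = C ((-2:ℝ)^j / j.factorial * (m.descFactorial j : ℝ)) * (X ^ j * X ^ (m-j)) := by
      rw [C_mul]; ring
    rw [h1, ← pow_add, Nat.add_sub_cancel' hj]
    congr 2
    rw [Nat.descFactorial_eq_factorial_mul_choose]
    push_cast
    have := (j.factorial_ne_zero)
    field_simp
  rw [Finset.sum_congr rfl key, ← Finset.sum_mul, ← map_sum C]
  have hsum : (∑ j ∈ range (m + 1), (-2 : ℝ) ^ j * m.choose j) = (-1 : ℝ) ^ m := by
    have h := add_pow (-2 : ℝ) 1 m
    simp only [one_pow, mul_one] at h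
    norm_num at h
    rw [← h]
  rw [hsum, X_pow_comp, neg_pow (X : Polynomial ℝ) m]
  simp

lemma iterate_derivative_sum {ι : Type*} (s : Finset ι) (f : ι → Polynomial ℝ) (k : ℕ) :
    derivative^[k] (∑ i ∈ s, f i) = ∑ i ∈ s, derivative^[k] (f i) := by
  simp_rw [← Module.End.pow_apply]
  exact map_sum _ _ _

lemma taylor_neg (q : Polynomial ℝ) (M : ℕ) (hq : q.natDegree ≤ M) :
    q.comp (-X) = ∑ j ∈ range (M + 1), C ((-2 : ℝ) ^ j / j.factorial) * X ^ j * derivative^[j] q := by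
  rw [q.as_sum_range' (M + 1) (Nat.lt_succ_of_le hq)]
  simp_rw [← C_mul_X_pow_eq_monomial]
  rw [Polynomial.sum_comp]
  simp_rw [iterate_derivative_sum, Finset.mul_sum, iterate_derivative_C_mul]
  rw [Finset.sum_comm]
  refine Finset.sum_congr rfl fun m hm => ?_
  rw [mul_comp, C_comp, taylor_neg_monomial m M (by rw [mem_range] at hm; omega)]
  rw [Finset.mul_sum]
  refine Finset.sum_congr rfl fun j _ => by ring
lemma iterate_derivative_comp_neg (p : Polynomial ℝ) (k : ℕ) :
    derivative^[k] (p.comp (-X)) = ((-1 : ℝ) ^ k) • ((derivative^[k] p).comp (-X)) := by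
  induction k with
  | zero => simp
  | succ k ih =>
    rw [Function.iterate_succ_apply', ih, derivative_smul, derivative_comp,
      Function.iterate_succ_apply']
    simp only [derivative_neg, derivative_X, pow_succ, mul_neg_one]
    rw [neg_one_mul, smul_neg, ← neg_smul]

lemma hermite_comp_neg (n : ℕ) :
    (hermitePoly n).comp (-X) = ((-1 : ℝ) ^ n) • hermitePoly n := by
  rw [hermitePoly, Polynomial.sum_comp, Finset.smul_sum]
  refine Finset.sum_congr rfl fun k hk => ?_
  rw [mem_range, Nat.lt_succ_iff] at hk
  have h2k : 2 * k ≤ n := by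
    rw [Nat.le_div_iff_mul_le (by norm_num)] at hk; omega
  rw [mul_comp, C_comp, X_pow_comp, neg_pow (X : Polynomial ℝ)]
  have e1 : (-1 : Polynomial ℝ) ^ (n - 2 * k) = (-1) ^ n := by
    have h := (by rw [← pow_add, Nat.sub_add_cancel h2k] :
      (-1 : Polynomial ℝ) ^ (n - 2 * k) * (-1) ^ (2 * k) = (-1) ^ n)
    rw [pow_mul] at h
    simpa using h
  rw [e1, smul_eq_C_mul]
  simp only [map_pow, map_neg, map_one]
  ring

lemma X_pow_mem_span (n : ℕ) :
    (X : Polynomial ℝ) ^ n ∈ Submodule.span ℝ (Set.range hermitePoly) := by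
  induction n using Nat.strong_induction_on with
  | _ n ih =>
    have hrep : hermitePoly n = C ((2:ℝ)^n) * X ^ n
        + ∑ k ∈ Ico 1 (n/2 + 1), C ((-1 : ℝ) ^ k * n.factorial * 2 ^ (n - 2 * k) /
          (k.factorial * (n - 2 * k).factorial)) * X ^ (n - 2 * k) := by
      rw [hermitePoly, range_eq_Ico, Finset.sum_eq_sum_Ico_succ_bot (Nat.succ_pos _)]
      congr 1
      simp [Nat.factorial_ne_zero]
    have hsum_mem : ∑ k ∈ Ico 1 (n/2 + 1), C ((-1 : ℝ) ^ k * n.factorial * 2 ^ (n - 2 * k) /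
          (k.factorial * (n - 2 * k).factorial)) * X ^ (n - 2 * k)
        ∈ Submodule.span ℝ (Set.range hermitePoly) := by
      refine Submodule.sum_mem _ fun k hk => ?_
      rw [mem_Ico] at hk
      have h2k : 2 * k ≤ n := by
        have := hk.2
        rw [Nat.lt_succ_iff, Nat.le_div_iff_mul_le (by norm_num)] at this
        omega
      have hlt : n - 2 * k < n := by omega
      rw [← smul_eq_C_mul]
      exact Submodule.smul_mem _ _ (ih _ hlt)
    have hmem : C ((2:ℝ)^n) * X ^ n ∈ Submodule.span ℝ (Set.range hermitePoly) := by
      have : C ((2:ℝ)^n) * X ^ n = hermitePoly n - ∑ k ∈ Ico 1 (n/2 + 1),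
          C ((-1 : ℝ) ^ k * n.factorial * 2 ^ (n - 2 * k) /
          (k.factorial * (n - 2 * k).factorial)) * X ^ (n - 2 * k) := by
        rw [hrep]; ring
      rw [this]
      exact Submodule.sub_mem _ (Submodule.subset_span (Set.mem_range_self n)) hsum_mem
    have := Submodule.smul_mem _ (((2:ℝ)^n)⁻¹) hmem
    rw [smul_eq_C_mul, ← mul_assoc, ← C_mul, inv_mul_cancel₀ (by positivity), C_1, one_mul] at this
    exact this

lemma span_hermite : Submodule.span ℝ (Set.range hermitePoly) = ⊤ := by
  rw [eq_top_iff]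
  rintro p -
  induction p using Polynomial.induction_on' with
  | add p q hp hq => exact Submodule.add_mem _ hp hq
  | monomial n a =>
    rw [← C_mul_X_pow_eq_monomial, ← smul_eq_C_mul]
    exact Submodule.smul_mem _ _ (X_pow_mem_span n)
lemma scalar_id {k m : ℕ} (hk : k ≤ m) :
    (-1 : ℝ) ^ k * ((-2 : ℝ) ^ (m - k) / (m - k).factorial)
      = (-2 : ℝ) ^ m * (1 / (2 ^ k * (m - k).factorial)) := by
  obtain ⟨d, rfl⟩ := Nat.exists_eq_add_of_le hk
  rw [Nat.add_sub_cancel_left, pow_add, show ((-2 : ℝ)) = (-1) * 2 by norm_num, mul_pow]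
  have hd : ((d.factorial : ℝ)) ≠ 0 := Nat.cast_ne_zero.mpr d.factorial_ne_zero
  field_simp
  rw [show ((-2:ℝ))^k = (-1)^k * 2^k by rw [show ((-2:ℝ)) = -1*2 by norm_num, mul_pow]]

lemma rep_comp (Tt : Polynomial ℝ →ₗ[ℝ] Polynomial ℝ) (Qt : ℕ → Polynomial ℝ)
    (hQt : ∀ p : Polynomial ℝ,
      Tt p = ∑ k ∈ range (p.natDegree + 1), Qt k * derivative^[k] p)
    (p : Polynomial ℝ) :
    Tt (p.comp (-X)) = ∑ n ∈ range (p.natDegree + 1),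
      (C ((-2 : ℝ) ^ n) * ∑ k ∈ range (n + 1),
        C ((1 : ℝ) / (2 ^ k * (n - k).factorial)) * Qt k * X ^ (n - k))
        * derivative^[n] p := by
  obtain ⟨N, hN⟩ : ∃ N, p.natDegree = N := ⟨_, rfl⟩
  have hdeg : (p.comp (-X)).natDegree = N := by
    rw [natDegree_comp]; simp [hN]
  rw [hQt, hdeg, hN]
  have step : ∀ k ∈ range (N + 1),
      Qt k * derivative^[k] (p.comp (-X))
        = ∑ j ∈ range (N - k + 1), ((-1 : ℝ) ^ k * ((-2 : ℝ) ^ j / j.factorial)) •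
            (Qt k * X ^ j * derivative^[k + j] p) := by
    intro k hk
    rw [iterate_derivative_comp_neg,
      taylor_neg (derivative^[k] p) (N - k) (hN ▸ natDegree_iterate_derivative p k),
      Finset.smul_sum, Finset.mul_sum]
    refine Finset.sum_congr rfl fun j hj => ?_
    rw [add_comm k j, Function.iterate_add_apply]
    rw [smul_eq_C_mul, smul_eq_C_mul, C_mul]
    ring
  rw [Finset.sum_congr rfl step]
  have flip := Finset.sum_range_diag_flip (N + 1)
    (fun k j => ((-1 : ℝ) ^ k * ((-2 : ℝ) ^ j / j.factorial)) •
      (Qt k * X ^ j * derivative^[k + j] p))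
  have hrange : ∀ k ∈ range (N + 1), (∑ j ∈ range (N - k + 1),
        ((-1 : ℝ) ^ k * ((-2 : ℝ) ^ j / j.factorial)) • (Qt k * X ^ j * derivative^[k + j] p))
      = ∑ j ∈ range (N + 1 - k), ((-1 : ℝ) ^ k * ((-2 : ℝ) ^ j / j.factorial)) •
          (Qt k * X ^ j * derivative^[k + j] p) := by
    intro k hk
    rw [mem_range, Nat.lt_succ_iff] at hk
    rw [show N + 1 - k = N - k + 1 from by omega]
  rw [Finset.sum_congr rfl hrange, ← flip]
  refine Finset.sum_congr rfl fun m hm => ?_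
  rw [mem_range, Nat.lt_succ_iff] at hm
  rw [Finset.mul_sum, Finset.sum_mul]
  refine Finset.sum_congr rfl fun k hk => ?_
  rw [mem_range, Nat.lt_succ_iff] at hk
  rw [Nat.add_sub_cancel' hk, smul_eq_C_mul, scalar_id hk, C_mul]
  ring

lemma aux_comp_eq (γ : ℕ → ℝ) (T Tt : Polynomial ℝ →ₗ[ℝ] Polynomial ℝ)
    (hT : ∀ n, T (hermitePoly n) = γ n • hermitePoly n)
    (hTt : ∀ n, Tt (hermitePoly n) = ((-1 : ℝ) ^ n * γ n) • hermitePoly n) :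
    (∀ p : Polynomial ℝ, T p = Tt (p.comp (-X))) ∧
      (∀ p : Polynomial ℝ, Tt p = T (p.comp (-X))) := by
  set R : Polynomial ℝ →ₗ[ℝ] Polynomial ℝ := (aeval (-X : Polynomial ℝ)).toLinearMap with hR
  have hRapp : ∀ p : Polynomial ℝ, R p = p.comp (-X) := fun p => rfl
  have hsq : ∀ n, ((-1 : ℝ) ^ n) * ((-1 : ℝ) ^ n * γ n) = γ n := by
    intro n
    rw [← mul_assoc, ← mul_pow]
    norm_num
  constructor
  · have h1 : T = Tt ∘ₗ R := by
      refine LinearMap.ext_on span_hermite ?_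
      rintro _ ⟨n, rfl⟩
      rw [hT, LinearMap.comp_apply, hRapp, hermite_comp_neg, map_smul, hTt, smul_smul, hsq]
    intro p
    rw [h1, LinearMap.comp_apply, hRapp]
  · have h2 : Tt = T ∘ₗ R := by
      refine LinearMap.ext_on span_hermite ?_
      rintro _ ⟨n, rfl⟩
      rw [hTt, LinearMap.comp_apply, hRapp, hermite_comp_neg, map_smul, hT, smul_smul]
    intro p
    rw [h2, LinearMap.comp_apply, hRapp]

lemma aux_main (T Tt : Polynomial ℝ →ₗ[ℝ] Polynomial ℝ) (Q Qt : ℕ → Polynomial ℝ)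
    (hComp : ∀ p : Polynomial ℝ, T p = Tt (p.comp (-X)))
    (hQ : ∀ p : Polynomial ℝ,
      T p = ∑ k ∈ Finset.range (p.natDegree + 1), Q k * (Polynomial.derivative^[k] p))
    (hQt : ∀ p : Polynomial ℝ,
      Tt p = ∑ k ∈ Finset.range (p.natDegree + 1), Qt k * (Polynomial.derivative^[k] p))
    (n : ℕ) :
    Q n = Polynomial.C ((-2 : ℝ) ^ n) *
        ∑ k ∈ Finset.range (n + 1),
          Polynomial.C ((1 : ℝ) / (2 ^ k * (n - k).factorial)) * Qt k *
            Polynomial.X ^ (n - k) := by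
  refine diffcoef_unique Q (fun m => Polynomial.C ((-2 : ℝ) ^ m) *
    ∑ k ∈ Finset.range (m + 1), Polynomial.C ((1 : ℝ) / (2 ^ k * (m - k).factorial)) * Qt k *
      Polynomial.X ^ (m - k)) (fun p => ?_) n
  rw [← hQ p, hComp p, rep_comp Tt Qt hQt p]

end AuxLemmas

/-- relation between the differential coefficients of the Hermite diagonal
operators with eigenvalues γₙ and (-1)ⁿ γₙ. -/
theorem stmt_10 (γ : ℕ → ℝ)
    (T Tt : Polynomial ℝ →ₗ[ℝ] Polynomial ℝ)
    (hT : ∀ n, T (hermitePoly n) = γ n • hermitePoly n)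
    (hTt : ∀ n, Tt (hermitePoly n) = ((-1 : ℝ) ^ n * γ n) • hermitePoly n)
    (Q Qt : ℕ → Polynomial ℝ)
    (hQ : ∀ p : Polynomial ℝ,
      T p = ∑ k ∈ Finset.range (p.natDegree + 1), Q k * (Polynomial.derivative^[k] p))
    (hQt : ∀ p : Polynomial ℝ,
      Tt p = ∑ k ∈ Finset.range (p.natDegree + 1), Qt k * (Polynomial.derivative^[k] p)) :
    ∀ n : ℕ,
      Q n = Polynomial.C ((-2 : ℝ) ^ n) *
        ∑ k ∈ Finset.range (n + 1),
          Polynomial.C ((1 : ℝ) / (2 ^ k * (n - k).factorial)) * Qt k *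
            Polynomial.X ^ (n - k) ∧
      Qt n = Polynomial.C ((-2 : ℝ) ^ n) *
        ∑ k ∈ Finset.range (n + 1),
          Polynomial.C ((1 : ℝ) / (2 ^ k * (n - k).factorial)) * Q k *
            Polynomial.X ^ (n - k) := by
  intro n
  obtain ⟨h1, h2⟩ := aux_comp_eq γ T Tt hT hTt
  exact ⟨aux_main T Tt Q Qt h1 hQ hQt n, aux_main Tt T Qt Q h2 hQt hQ n⟩
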